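/- Let A be an n×n complex matrix with pairwise distinct eigenvalues λ_j and right eigenvectors R_j, and suppose λ'_j, R'_j, D satisfy the differentiated eigen-equation (A − λ_j)·R'_j + D·R_j = λ'_j·R_j with λ'_j ≠ 0 for all j. Then the 2n vectors (R_j, 0) and (1/λ'_j)·(R'_j, R_j), j = 1..n, put B = [[A, D],[0, A]] into Jordan form: B·X = X·J where J is block diagonal with 2×2 Jordan blocks [[λ_j, 1],[0, λ_j]]. -/
import Mathlib

open Matrix

theorem block_matrix_jordan_form (n : ℕ) (A D : Matrix (Fin n) (Fin n) ℂ)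
    (lam : Fin n → ℂ) (hlam : Function.Injective lam)
    (R R' : Fin n → Fin n → ℂ) (lam' : Fin n → ℂ)
    (hR : ∀ j, A.mulVec (R j) = lam j • R j)
    (hlam' : ∀ j, lam' j ≠ 0)
    (hR' : ∀ j, A.mulVec (R' j) + D.mulVec (R j) = lam j • R' j + lam' j • R j) :
    Matrix.fromBlocks A D 0 A *
        (Matrix.of fun (r : Fin n ⊕ Fin n) (p : Fin 2 × Fin n) =>
          if p.1 = 0 then Sum.elim (R p.2) 0 r
          else (lam' p.2)⁻¹ * Sum.elim (R' p.2) (R p.2) r) =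
      (Matrix.of fun (r : Fin n ⊕ Fin n) (p : Fin 2 × Fin n) =>
          if p.1 = 0 then Sum.elim (R p.2) 0 r
          else (lam' p.2)⁻¹ * Sum.elim (R' p.2) (R p.2) r) *
        Matrix.blockDiagonal (fun j => !![lam j, 1; 0, lam j]) := by
  have pull : ∀ (M : Matrix (Fin n) (Fin n) ℂ) (i : Fin n) (c : ℂ) (v : Fin n → ℂ),
      (∑ x, M i x * (c * v x)) = c * ∑ x, M i x * v x := fun M i c v => by
    rw [Finset.mul_sum]; exact Finset.sum_congr rfl fun x _ => by ring
  ext r p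
  obtain ⟨k, j⟩ := p
  have hRj := fun i => congrFun (hR j) i
  have hR'j := fun i => congrFun (hR' j) i
  simp only [mulVec, dotProduct, Pi.add_apply, Pi.smul_apply, smul_eq_mul] at hRj hR'j
  rw [Matrix.mul_apply, Matrix.mul_apply]
  rw [Fintype.sum_sum_type, Fintype.sum_prod_type]
  simp only [Matrix.of_apply, Matrix.blockDiagonal_apply, Fin.sum_univ_two]
  fin_cases k <;> rcases r with i | i <;>
    simp only [Matrix.fromBlocks, Matrix.of_apply, Sum.elim_inl, Sum.elim_inr,
      Fin.mk_zero, Fin.mk_one, Fin.isValue, one_ne_zero, if_true, if_false, reduceIte,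
      Matrix.cons_val_zero, Matrix.cons_val_one, Matrix.head_cons, Pi.zero_apply,
      Matrix.zero_apply, mul_ite, mul_zero, ite_mul, zero_mul, Finset.sum_ite_eq',
      Finset.mem_univ, mul_one, add_zero, zero_add, Finset.sum_const_zero,
      ← Finset.mul_sum]
  · linear_combination hRj i
  · rw [pull A i, pull D i]
    have hinv : (lam' j)⁻¹ * lam' j = 1 := inv_mul_cancel₀ (hlam' j)
    linear_combination (lam' j)⁻¹ * hR'j i + R j i * hinv
  · rw [pull A i]
    linear_combination (lam' j)⁻¹ * hRj i
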